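/- Let $P$ be a self-adjoint Markov operator on $L^2$ and suppose the family $(P^k)_{k\ge 1}$ satisfies $L^2$ Gaffney estimates: for every $N$, $\|P^k[f\mathbf{1}_F]\|_{L^2(E)} \le C_N(1+\rho(E,F)/(1+k))^{-N}\|f\|_{L^2}$. Then the family $(I - (I+s\Delta)^{-1})_{s>0}$ satisfies $L^2$ Gaffney estimates: for every $N$, $\|(I-(I+s\Delta)^{-1})[f\mathbf{1}_F]\|_{L^2(E)} \le C_N'(1+\rho(E,F)/(1+s))^{-N}\|f\|_{L^2}$. -/

import Mathlib

private lemma pow_le_fact_mul_exp {y : ℝ} (hy : 0 ≤ y) (m : ℕ) :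
    y ^ m ≤ m.factorial * Real.exp y := by
  have h : y ^ m / m.factorial ≤ ∑ i ∈ Finset.range (m + 1), y ^ i / i.factorial :=
    Finset.single_le_sum (f := fun i => y ^ i / (i.factorial : ℝ))
      (fun i _ => by positivity) (Finset.self_mem_range_succ m)
  have h2 : y ^ m / m.factorial ≤ Real.exp y := h.trans (Real.sum_le_exp_of_nonneg hy _)
  have hfp : (0:ℝ) < m.factorial := by positivity
  calc y ^ m = y ^ m / m.factorial * m.factorial := by field_simp
    _ ≤ Real.exp y * m.factorial := mul_le_mul_of_nonneg_right h2 hfp.le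
    _ = m.factorial * Real.exp y := mul_comm _ _

private lemma key_ineq {u : ℝ} (hu : 1 ≤ u) (k m : ℕ) :
    (1 - 1 / u) ^ k * (1 + (1 + (k : ℝ)) / u) ^ m
      ≤ 2 ^ (2 * m + 1) * m.factorial := by
  have hu0 : (0:ℝ) < u := lt_of_lt_of_le one_pos hu
  have hinv : 1 / u ≤ 1 := by
    rw [div_le_one hu0]; exact hu
  have hinv0 : 0 ≤ 1 / u := by positivity
  set y : ℝ := (k : ℝ) / u with hy_def
  have hy : 0 ≤ y := by positivity
  -- (1 - 1/u)^k ≤ exp (-y)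
  have h1 : (1 - 1 / u) ^ k ≤ Real.exp (-y) := by
    have hb : 1 - 1 / u ≤ Real.exp (-(1 / u)) := by
      have := Real.add_one_le_exp (-(1 / u)); linarith
    have hb0 : 0 ≤ 1 - 1 / u := by linarith
    calc (1 - 1 / u) ^ k ≤ Real.exp (-(1 / u)) ^ k := pow_le_pow_left₀ hb0 hb k
      _ = Real.exp (-(1 / u) * k) := by rw [← Real.exp_nat_mul]; ring_nf
      _ = Real.exp (-y) := by rw [hy_def]; ring_nf
  -- (1 + (1+k)/u)^m ≤ 2^(2m+1) m! exp y
  have h2 : (1 + (1 + (k : ℝ)) / u) ^ m ≤ 2 ^ (2 * m) * (2 * m.factorial * Real.exp y) := by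
    have ha : 1 + (1 + (k : ℝ)) / u ≤ 2 * (1 + y) := by
      have : (1 + (k : ℝ)) / u = 1 / u + y := by rw [hy_def]; ring
      rw [this]; linarith
    have ha0 : 0 ≤ 1 + (1 + (k : ℝ)) / u := by positivity
    have h3 : (1 + y) ^ m ≤ 2 ^ m * (1 + y ^ m) := by
      rcases le_total y 1 with hy1 | hy1
      · have : (1 + y) ^ m ≤ 2 ^ m := pow_le_pow_left₀ (by linarith) (by linarith) m
        have hym : 0 ≤ y ^ m := by positivity
        nlinarith [pow_pos (show (0:ℝ) < 2 by norm_num) m]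
      · have : (1 + y) ^ m ≤ (2 * y) ^ m := pow_le_pow_left₀ (by linarith) (by linarith) m
        have hym : 0 ≤ y ^ m := by positivity
        calc (1 + y) ^ m ≤ (2 * y) ^ m := this
          _ = 2 ^ m * y ^ m := by rw [mul_pow]
          _ ≤ 2 ^ m * (1 + y ^ m) := by
              have : (0:ℝ) ≤ 2 ^ m := by positivity
              nlinarith
    have h4 : 1 + y ^ m ≤ 2 * m.factorial * Real.exp y := by
      have hye : (1:ℝ) ≤ Real.exp y := Real.one_le_exp hy
      have hf1 : (1:ℝ) ≤ m.factorial := by exact_mod_cast Nat.one_le_iff_ne_zero.mpr m.factorial_ne_zero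
      have := pow_le_fact_mul_exp hy m
      nlinarith
    calc (1 + (1 + (k : ℝ)) / u) ^ m ≤ (2 * (1 + y)) ^ m := pow_le_pow_left₀ ha0 ha m
      _ = 2 ^ m * (1 + y) ^ m := by rw [mul_pow]
      _ ≤ 2 ^ m * (2 ^ m * (1 + y ^ m)) := by
          have : (0:ℝ) ≤ 2 ^ m := by positivity
          exact mul_le_mul_of_nonneg_left h3 this
      _ ≤ 2 ^ m * (2 ^ m * (2 * m.factorial * Real.exp y)) := by
          have h2m : (0:ℝ) ≤ 2 ^ m := by positivity
          exact mul_le_mul_of_nonneg_left (mul_le_mul_of_nonneg_left h4 h2m) h2m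
      _ = 2 ^ (2 * m) * (2 * m.factorial * Real.exp y) := by
          rw [two_mul m, pow_add]; ring
  have hb0 : 0 ≤ (1 - 1 / u) ^ k := pow_nonneg (by linarith) k
  calc (1 - 1 / u) ^ k * (1 + (1 + (k : ℝ)) / u) ^ m
      ≤ Real.exp (-y) * (2 ^ (2 * m) * (2 * m.factorial * Real.exp y)) := by
        have he0 : 0 ≤ Real.exp (-y) := (Real.exp_pos _).le
        have hb0' : (0:ℝ) ≤ (1 + (k : ℝ)) / u := div_nonneg (by positivity) hu0.le
        have hrhs : 0 ≤ (1 + (1 + (k : ℝ)) / u) ^ m := pow_nonneg (by linarith) m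
        exact mul_le_mul h1 h2 hrhs he0
    _ = 2 ^ (2 * m + 1) * m.factorial * (Real.exp (-y) * Real.exp y) := by
        rw [pow_succ]; ring
    _ = 2 ^ (2 * m + 1) * m.factorial := by
        rw [← Real.exp_add, neg_add_cancel, Real.exp_zero, mul_one]

private lemma zpow_neg_anti {a b : ℝ} (ha : 1 ≤ a) (hab : a ≤ b) (N : ℕ) :
    b ^ (-(N : ℤ)) ≤ a ^ (-(N : ℤ)) := by
  have ha0 : (0:ℝ) < a := lt_of_lt_of_le one_pos ha
  rw [zpow_neg, zpow_neg, zpow_natCast, zpow_natCast]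
  exact inv_anti₀ (pow_pos ha0 N) (pow_le_pow_left₀ ha0.le hab N)

private lemma zpow_neg_le_one {a : ℝ} (ha : 1 ≤ a) (N : ℕ) : a ^ (-(N : ℤ)) ≤ 1 := by
  have := zpow_neg_anti (le_refl (1:ℝ)) ha N
  simpa using this

/-- The main per-term numeric inequality. -/
private lemma main_ineq {u D : ℝ} (hu : 1 < u) (hD : 0 ≤ D) (N k : ℕ) :
    1 / u * ((u - 1) / u) ^ k * (1 + D / (1 + (k : ℝ))) ^ (-(N : ℤ))
      ≤ 2 ^ (2 * (N + 2) + 1) * (N + 2).factorial * (1 + D / u) ^ (-(N : ℤ))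
          * (u / (u + k) - u / (u + (k + 1 : ℕ))) := by
  have hu0 : (0:ℝ) < u := lt_trans one_pos hu
  have hk0 : (0:ℝ) < 1 + (k : ℝ) := by positivity
  set m : ℕ := N + 2 with hm
  set Cm : ℝ := 2 ^ (2 * m + 1) * m.factorial with hCm
  have hCm0 : (0:ℝ) < Cm := by rw [hCm]; positivity
  set a : ℝ := 1 + D / (1 + (k : ℝ)) with haa
  set b : ℝ := 1 + D / u with hbb
  set x : ℝ := 1 + (1 + (k : ℝ)) / u with hxx
  have ha1 : 1 ≤ a := by rw [haa]; have : 0 ≤ D / (1 + (k:ℝ)) := by positivity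
                         linarith
  have hb1 : 1 ≤ b := by rw [hbb]; have : 0 ≤ D / u := by positivity
                         linarith
  have hx1 : 1 ≤ x := by rw [hxx]; have : 0 ≤ (1 + (k:ℝ)) / u := by positivity
                         linarith
  have ha0 : (0:ℝ) < a := lt_of_lt_of_le one_pos ha1
  have hb0 : (0:ℝ) < b := lt_of_lt_of_le one_pos hb1
  have hx0 : (0:ℝ) < x := lt_of_lt_of_le one_pos hx1
  -- b ≤ a * x
  have hax : b ≤ a * x := by
    have he : a * x = 1 + (1 + (k:ℝ)) / u + D / (1 + (k:ℝ)) + D / u := by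
      rw [haa, hxx]; field_simp; ring
    have h1 : 0 ≤ (1 + (k:ℝ)) / u := by positivity
    have h2 : 0 ≤ D / (1 + (k:ℝ)) := by positivity
    rw [hbb, he]; linarith
  -- key bound
  have hr : (u - 1) / u = 1 - 1 / u := by field_simp
  have hkey : ((u - 1) / u) ^ k * x ^ m ≤ Cm := by
    rw [hr, hxx, hCm]; exact key_ineq hu.le k m
  have hr0 : 0 ≤ ((u - 1) / u) ^ k := by
    have : (0:ℝ) ≤ (u - 1) / u := by
      apply div_nonneg <;> linarith
    positivity
  -- core: r^k * (b^N * x^2) ≤ Cm * a^N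
  have hcore : ((u - 1) / u) ^ k * (b ^ N * x ^ 2) ≤ Cm * a ^ N := by
    have hbN : b ^ N ≤ a ^ N * x ^ N := by
      rw [← mul_pow]; exact pow_le_pow_left₀ hb0.le hax N
    calc ((u - 1) / u) ^ k * (b ^ N * x ^ 2)
        ≤ ((u - 1) / u) ^ k * (a ^ N * x ^ N * x ^ 2) := by
          apply mul_le_mul_of_nonneg_left _ hr0
          apply mul_le_mul_of_nonneg_right hbN (by positivity)
      _ = a ^ N * (((u - 1) / u) ^ k * x ^ m) := by
          rw [hm, pow_add]; ring
      _ ≤ a ^ N * Cm := mul_le_mul_of_nonneg_left hkey (by positivity)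
      _ = Cm * a ^ N := mul_comm _ _
  -- telescoping lower bound for RHS factor
  have htel : 1 / (u * x ^ 2) ≤ u / (u + (k:ℝ)) - u / (u + ((k + 1 : ℕ) : ℝ)) := by
    have hk1 : (0:ℝ) < u + k := by positivity
    have hk2 : (0:ℝ) < u + (k:ℝ) + 1 := by positivity
    have e1 : u / (u + (k:ℝ)) - u / (u + ((k + 1 : ℕ):ℝ)) = u / ((u + k) * (u + (k:ℝ) + 1)) := by
      push_cast
      field_simp
      ring
    have e2 : u * x ^ 2 = (u + (k:ℝ) + 1) ^ 2 / u := by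
      rw [hxx]; field_simp; ring
    rw [e1, e2, div_div_eq_mul_div, one_mul]
    rw [div_le_div_iff₀ (by positivity) (by positivity)]
    nlinarith
  -- combine
  rw [zpow_neg, zpow_neg, zpow_natCast, zpow_natCast]
  have hfinal : 1 / u * ((u - 1) / u) ^ k * (a ^ N)⁻¹
      ≤ Cm * (b ^ N)⁻¹ * (1 / (u * x ^ 2)) := by
    have hlhs' : ∀ t : ℝ, 1 / u * t * (a ^ N)⁻¹ = t / (u * a ^ N) := by
      intro t; field_simp
    have hlhs : 1 / u * ((u - 1) / u) ^ k * (a ^ N)⁻¹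
        = ((u - 1) / u) ^ k / (u * a ^ N) := hlhs' _
    have hrw : Cm * (b ^ N)⁻¹ * (1 / (u * x ^ 2)) = Cm / (b ^ N * (u * x ^ 2)) := by
      field_simp
    rw [hlhs, hrw, div_le_div_iff₀ (by positivity) (by positivity)]
    calc ((u - 1) / u) ^ k * (b ^ N * (u * x ^ 2))
        = u * (((u - 1) / u) ^ k * (b ^ N * x ^ 2)) := by ring
      _ ≤ u * (Cm * a ^ N) := mul_le_mul_of_nonneg_left hcore hu0.le
      _ = Cm * (u * a ^ N) := by ring
  calc 1 / u * ((u - 1) / u) ^ k * (a ^ N)⁻¹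
      ≤ Cm * (b ^ N)⁻¹ * (1 / (u * x ^ 2)) := hfinal
    _ ≤ Cm * (b ^ N)⁻¹ * (u / (u + (k:ℝ)) - u / (u + ((k + 1 : ℕ):ℝ))) := by
        exact mul_le_mul_of_nonneg_left htel (by positivity)

set_option maxHeartbeats 1000000 in
theorem stmt_13 {H : Type*} [NormedAddCommGroup H] [InnerProductSpace ℝ H] [CompleteSpace H]
    (P : H →L[ℝ] H) (hP : ‖P‖ ≤ 1) (hPsa : IsSelfAdjoint P)
    (A B : H →L[ℝ] H) (D : ℝ) (hD : 0 ≤ D)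
    (hGaffney : ∀ N : ℕ, ∃ C : ℝ, 0 < C ∧ ∀ k : ℕ, ∀ f : H,
      ‖A ((P ^ k) (B f))‖ ≤ C * (1 + D / (1 + (k : ℝ))) ^ (-(N : ℤ)) * ‖f‖) :
    ∀ N : ℕ, ∃ C' : ℝ, 0 < C' ∧ ∀ s : ℝ, 0 < s → ∀ f : H,
      ‖A ((1 - ∑' k : ℕ, (1 / (1 + s) * (s / (1 + s)) ^ k) • P ^ k) (B f))‖
        ≤ C' * (1 + D / (1 + s)) ^ (-(N : ℤ)) * ‖f‖ := by
  intro N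
  obtain ⟨C, hC, hG⟩ := hGaffney N
  set Cm : ℝ := 2 ^ (2 * (N + 2) + 1) * (N + 2).factorial with hCm
  have hCm0 : (0:ℝ) < Cm := by rw [hCm]; positivity
  refine ⟨C * (1 + Cm), by positivity, ?_⟩
  intro s hs f
  set u : ℝ := 1 + s with hu_def
  have hu1 : 1 < u := by rw [hu_def]; linarith
  have hu0 : (0:ℝ) < u := lt_trans one_pos hu1
  set b : ℝ := 1 + D / u with hbb
  have hb1 : (1:ℝ) ≤ b := by
    rw [hbb]; have : 0 ≤ D / u := by positivity
    linarith
  have hbN0 : (0:ℝ) < b ^ (-(N:ℤ)) := by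
    apply zpow_pos; linarith
  -- coefficients
  set c : ℕ → ℝ := fun k => 1 / (1 + s) * (s / (1 + s)) ^ k with hc
  have hc_nonneg : ∀ k, 0 ≤ c k := by
    intro k; rw [hc]; positivity
  have hr0 : (0:ℝ) ≤ s / (1 + s) := by positivity
  have hr1 : s / (1 + s) < 1 := by
    rw [div_lt_one (by linarith)]; linarith
  have hcsum : Summable c := by
    exact (summable_geometric_of_lt_one hr0 hr1).mul_left _
  -- powers of P are contractions
  have hPk : ∀ k : ℕ, ‖(P ^ k : H →L[ℝ] H)‖ ≤ 1 := by
    intro k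
    induction k with
    | zero => simpa [ContinuousLinearMap.one_def] using ContinuousLinearMap.norm_id_le
    | succ n ih =>
      calc ‖P ^ (n + 1)‖ = ‖P ^ n * P‖ := by rw [pow_succ]
        _ ≤ ‖P ^ n‖ * ‖P‖ := norm_mul_le _ _
        _ ≤ 1 * 1 := mul_le_mul ih hP (norm_nonneg _) zero_le_one
        _ = 1 := one_mul 1
  -- summability of operator series
  have hsumop : Summable (fun k : ℕ => c k • (P ^ k : H →L[ℝ] H)) := by
    apply Summable.of_norm_bounded hcsum
    intro k
    calc ‖c k • (P ^ k : H →L[ℝ] H)‖ ≤ ‖c k‖ * ‖(P ^ k : H →L[ℝ] H)‖ :=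
          ContinuousLinearMap.opNorm_smul_le _ _
      _ = c k * ‖(P ^ k : H →L[ℝ] H)‖ := by
          rw [Real.norm_eq_abs, abs_of_nonneg (hc_nonneg k)]
      _ ≤ c k * 1 := mul_le_mul_of_nonneg_left (hPk k) (hc_nonneg k)
      _ = c k := mul_one _
  -- summability of applied series
  have hsumap : Summable (fun k : ℕ => c k • (P ^ k) (B f)) := by
    apply Summable.of_norm_bounded
      (hcsum.mul_right ‖B f‖)
    intro k
    calc ‖c k • (P ^ k) (B f)‖ ≤ ‖c k‖ * ‖(P ^ k) (B f)‖ := norm_smul_le _ _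
      _ = c k * ‖(P ^ k) (B f)‖ := by
          rw [Real.norm_eq_abs, abs_of_nonneg (hc_nonneg k)]
      _ ≤ c k * ‖B f‖ := by
          apply mul_le_mul_of_nonneg_left _ (hc_nonneg k)
          calc ‖(P ^ k) (B f)‖ ≤ ‖(P ^ k : H →L[ℝ] H)‖ * ‖B f‖ := (P ^ k).le_opNorm _
            _ ≤ 1 * ‖B f‖ := mul_le_mul_of_nonneg_right (hPk k) (norm_nonneg _)
            _ = ‖B f‖ := one_mul _
  -- rewrite the expression
  have h1 : A ((1 - ∑' k : ℕ, (1 / (1 + s) * (s / (1 + s)) ^ k) • P ^ k) (B f))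
      = A (B f) - ∑' k : ℕ, c k • A ((P ^ k) (B f)) := by
    rw [ContinuousLinearMap.sub_apply, ContinuousLinearMap.one_apply, map_sub]
    congr 1
    have happly : (∑' k : ℕ, c k • (P ^ k : H →L[ℝ] H)) (B f)
        = ∑' k : ℕ, c k • (P ^ k) (B f) := by
      have := (ContinuousLinearMap.apply ℝ H (B f)).map_tsum hsumop
      simpa using this
    rw [show (∑' k : ℕ, (1 / (1 + s) * (s / (1 + s)) ^ k) • P ^ k)
        = ∑' k : ℕ, c k • (P ^ k : H →L[ℝ] H) from rfl, happly, A.map_tsum hsumap]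
    congr 1
    funext k
    rw [map_smul]
  rw [h1]
  -- bound each term
  have hterm : ∀ k : ℕ, ‖c k • A ((P ^ k) (B f))‖
      ≤ Cm * C * ‖f‖ * b ^ (-(N:ℤ)) * (u / (u + (k:ℝ)) - u / (u + ((k + 1 : ℕ):ℝ))) := by
    intro k
    have hnrm : ‖c k • A ((P ^ k) (B f))‖ ≤ c k * ‖A ((P ^ k) (B f))‖ := by
      calc ‖c k • A ((P ^ k) (B f))‖ ≤ ‖c k‖ * ‖A ((P ^ k) (B f))‖ := norm_smul_le _ _
        _ = c k * ‖A ((P ^ k) (B f))‖ := by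
            rw [Real.norm_eq_abs, abs_of_nonneg (hc_nonneg k)]
    refine hnrm.trans ?_
    have hGk := hG k f
    have hck : c k = 1 / u * ((u - 1) / u) ^ k := by
      rw [hc, hu_def]; norm_num
    have hmain := main_ineq hu1 hD N k
    have hzpos : (0:ℝ) < (1 + D / (1 + (k:ℝ))) ^ (-(N:ℤ)) := by
      apply zpow_pos
      have : 0 ≤ D / (1 + (k:ℝ)) := by positivity
      linarith
    calc c k * ‖A ((P ^ k) (B f))‖
        ≤ c k * (C * (1 + D / (1 + (k : ℝ))) ^ (-(N : ℤ)) * ‖f‖) :=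
          mul_le_mul_of_nonneg_left hGk (hc_nonneg k)
      _ = C * ‖f‖ * (c k * (1 + D / (1 + (k : ℝ))) ^ (-(N : ℤ))) := by ring
      _ ≤ C * ‖f‖ * (Cm * b ^ (-(N:ℤ)) * (u / (u + (k:ℝ)) - u / (u + ((k + 1 : ℕ):ℝ)))) := by
          apply mul_le_mul_of_nonneg_left _ (by positivity)
          rw [hck]
          calc 1 / u * ((u - 1) / u) ^ k * (1 + D / (1 + (k:ℝ))) ^ (-(N:ℤ))
              ≤ 2 ^ (2 * (N + 2) + 1) * (N + 2).factorial * (1 + D / u) ^ (-(N:ℤ))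
                  * (u / (u + (k:ℝ)) - u / (u + ((k + 1 : ℕ):ℝ))) := hmain
            _ = Cm * b ^ (-(N:ℤ)) * (u / (u + (k:ℝ)) - u / (u + ((k + 1 : ℕ):ℝ))) := by
                rw [hCm, hbb]
      _ = Cm * C * ‖f‖ * b ^ (-(N:ℤ)) * (u / (u + (k:ℝ)) - u / (u + ((k + 1 : ℕ):ℝ))) := by
          ring
  -- the telescoping partial sums
  have htel_nonneg : ∀ k : ℕ, 0 ≤ u / (u + (k:ℝ)) - u / (u + ((k + 1 : ℕ):ℝ)) := by
    intro k
    have h1 : (0:ℝ) < u + (k:ℝ) := by positivity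
    have h2 : (0:ℝ) < u + ((k + 1 : ℕ):ℝ) := by positivity
    have h3 : u + (k:ℝ) ≤ u + ((k + 1 : ℕ):ℝ) := by push_cast; linarith
    have := div_le_div_of_nonneg_left hu0.le h1 h3
    linarith
  have hpartial : ∀ n : ℕ, ∑ k ∈ Finset.range n,
      (u / (u + (k:ℝ)) - u / (u + ((k + 1 : ℕ):ℝ))) ≤ 1 := by
    intro n
    have := Finset.sum_range_sub' (f := fun k : ℕ => u / (u + (k:ℝ))) n
    rw [this]
    have h0 : u / (u + ((0:ℕ):ℝ)) = 1 := by
      norm_num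
      exact hu0.ne'
    rw [h0]
    have : 0 ≤ u / (u + (n:ℝ)) := by positivity
    linarith
  -- summability of the norms
  have hsumnorm : Summable (fun k : ℕ => ‖c k • A ((P ^ k) (B f))‖) := by
    apply Summable.of_nonneg_of_le (fun k => norm_nonneg _) hterm
    apply summable_of_sum_range_le (c := Cm * C * ‖f‖ * b ^ (-(N:ℤ)))
      (fun k => by
        have := htel_nonneg k
        positivity)
    intro n
    rw [← Finset.mul_sum]
    calc Cm * C * ‖f‖ * b ^ (-(N:ℤ)) * ∑ k ∈ Finset.range n,
          (u / (u + (k:ℝ)) - u / (u + ((k + 1 : ℕ):ℝ)))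
        ≤ Cm * C * ‖f‖ * b ^ (-(N:ℤ)) * 1 :=
          mul_le_mul_of_nonneg_left (hpartial n) (by positivity)
      _ = Cm * C * ‖f‖ * b ^ (-(N:ℤ)) := mul_one _
  -- bound the tsum
  have htsum : ‖∑' k : ℕ, c k • A ((P ^ k) (B f))‖ ≤ Cm * C * ‖f‖ * b ^ (-(N:ℤ)) := by
    calc ‖∑' k : ℕ, c k • A ((P ^ k) (B f))‖
        ≤ ∑' k : ℕ, ‖c k • A ((P ^ k) (B f))‖ := norm_tsum_le_tsum_norm hsumnorm
      _ ≤ Cm * C * ‖f‖ * b ^ (-(N:ℤ)) := by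
          apply Real.tsum_le_of_sum_range_le (fun k => norm_nonneg _)
          intro n
          calc ∑ k ∈ Finset.range n, ‖c k • A ((P ^ k) (B f))‖
              ≤ ∑ k ∈ Finset.range n, Cm * C * ‖f‖ * b ^ (-(N:ℤ))
                  * (u / (u + (k:ℝ)) - u / (u + ((k + 1 : ℕ):ℝ))) :=
                Finset.sum_le_sum (fun k _ => hterm k)
            _ = Cm * C * ‖f‖ * b ^ (-(N:ℤ)) * ∑ k ∈ Finset.range n,
                  (u / (u + (k:ℝ)) - u / (u + ((k + 1 : ℕ):ℝ))) := by
                rw [← Finset.mul_sum]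
            _ ≤ Cm * C * ‖f‖ * b ^ (-(N:ℤ)) * 1 :=
                mul_le_mul_of_nonneg_left (hpartial n) (by positivity)
            _ = Cm * C * ‖f‖ * b ^ (-(N:ℤ)) := mul_one _
  -- bound ‖A (B f)‖
  have hAB : ‖A (B f)‖ ≤ C * b ^ (-(N:ℤ)) * ‖f‖ := by
    have h0 := hG 0 f
    rw [pow_zero, ContinuousLinearMap.one_apply] at h0
    have hcast : (1:ℝ) + D / (1 + ((0:ℕ):ℝ)) = 1 + D := by norm_num
    rw [hcast] at h0
    have hmono : (1 + D) ^ (-(N:ℤ)) ≤ b ^ (-(N:ℤ)) := by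
      apply zpow_neg_anti hb1
      rw [hbb]
      have : D / u ≤ D := by
        rw [div_le_iff₀ hu0]
        nlinarith
      linarith
    calc ‖A (B f)‖ ≤ C * (1 + D) ^ (-(N:ℤ)) * ‖f‖ := h0
      _ ≤ C * b ^ (-(N:ℤ)) * ‖f‖ := by
          apply mul_le_mul_of_nonneg_right _ (norm_nonneg f)
          exact mul_le_mul_of_nonneg_left hmono hC.le
  -- conclude
  calc ‖A (B f) - ∑' k : ℕ, c k • A ((P ^ k) (B f))‖
      ≤ ‖A (B f)‖ + ‖∑' k : ℕ, c k • A ((P ^ k) (B f))‖ := norm_sub_le _ _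
    _ ≤ C * b ^ (-(N:ℤ)) * ‖f‖ + Cm * C * ‖f‖ * b ^ (-(N:ℤ)) := add_le_add hAB htsum
    _ = C * (1 + Cm) * b ^ (-(N:ℤ)) * ‖f‖ := by ring
    _ = C * (1 + Cm) * (1 + D / (1 + s)) ^ (-(N:ℤ)) * ‖f‖ := by rw [hbb, hu_def]
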